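/- Let C_1 and C_2 be bicolored directed cycles. Then C_1 □ C_2 has a bikernel by monochromatic paths if and only if either both C_1 and C_2 have bikernels, or both are monochromatic cycles of the same length and opposite colors. -/

import Mathlib

/-- A bicolored digraph is given by two arc relations `A1` (color-1 arcs) and `A2`
(color-2 arcs). A monochromatic path of color `i` is a nonempty chain of `Ai`-arcs,
i.e. `Relation.TransGen Ai`. A set `B` is a bikernel by monochromatic paths if it is
nonempty, independent by monochromatic paths, absorbent with color 1 and dominant
with color 2. -/
def IsBikernel {V : Type*} (A1 A2 : V → V → Prop) (B : Set V) : Prop :=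
  B.Nonempty ∧
  (∀ u ∈ B, ∀ v ∈ B, u ≠ v →
    ¬ Relation.TransGen A1 u v ∧ ¬ Relation.TransGen A2 u v) ∧
  (∀ v, v ∉ B → ∃ b ∈ B, Relation.TransGen A1 v b) ∧
  (∀ v, v ∉ B → ∃ b ∈ B, Relation.TransGen A2 b v)

/-- The bicolored directed cycle on `Fin n` with arcs `(x_i, x_{(i+1) mod n})`, the
arc leaving `x_i` having color `c i` (color 1 is `0`, color 2 is `1`). -/
def cycArc (n : ℕ) (c : ℕ → Fin 2) (col : Fin 2) : Fin n → Fin n → Prop :=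
  fun x y => (y : ℕ) = ((x : ℕ) + 1) % n ∧ c (x : ℕ) = col

/-- The arc relation of the Cartesian product of two digraphs restricted to one
color. -/
def boxArc {V W : Type*} (AG : V → V → Prop) (AH : W → W → Prop) :
    V × W → V × W → Prop :=
  fun p q => (p.1 = q.1 ∧ AH p.2 q.2) ∨ (p.2 = q.2 ∧ AG p.1 q.1)

namespace BoxCycAux

open Relation

lemma fin2_cases (a : Fin 2) : a = 0 ∨ a = 1 := by
  have h := a.isLt
  have : a.val = 0 ∨ a.val = 1 := by omega
  rcases this with h' | h'
  · exact Or.inl (Fin.ext h')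
  · exact Or.inr (Fin.ext h')

lemma fin2_ne (a b : Fin 2) (h : a ≠ b) : (a = 0 ∧ b = 1) ∨ (a = 1 ∧ b = 0) := by
  rcases fin2_cases a with ha | ha <;> rcases fin2_cases b with hb | hb <;>
    subst ha <;> subst hb <;> simp_all

variable {n : ℕ}

def fsucc (x : Fin n) : Fin n :=
  ⟨((x : ℕ) + 1) % n, Nat.mod_lt _ (Nat.lt_of_le_of_lt (Nat.zero_le _) x.isLt)⟩

def fpred (x : Fin n) : Fin n :=
  ⟨((x : ℕ) + n - 1) % n, Nat.mod_lt _ (Nat.lt_of_le_of_lt (Nat.zero_le _) x.isLt)⟩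

@[simp] lemma fsucc_val (x : Fin n) : (fsucc x : ℕ) = ((x : ℕ) + 1) % n := rfl
@[simp] lemma fpred_val (x : Fin n) : (fpred x : ℕ) = ((x : ℕ) + n - 1) % n := rfl

lemma fsucc_ne (hn : 2 ≤ n) (x : Fin n) : fsucc x ≠ x := by
  intro h
  have hv : ((x : ℕ) + 1) % n = (x : ℕ) := congrArg Fin.val h
  have hx := x.isLt
  rcases Nat.lt_or_ge ((x : ℕ) + 1) n with h' | h'
  · rw [Nat.mod_eq_of_lt h'] at hv; omega
  · have hxn : (x : ℕ) + 1 = n := by omega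
    rw [hxn, Nat.mod_self] at hv; omega

lemma fpred_fsucc (x : Fin n) : fpred (fsucc x) = x := by
  apply Fin.ext
  have hx := x.isLt
  have hn : 0 < n := Nat.lt_of_le_of_lt (Nat.zero_le _) hx
  simp only [fpred_val, fsucc_val]
  have h : ((x : ℕ) + 1) % n + n - 1 = ((x : ℕ) + 1) % n + (n - 1) := by omega
  rw [h, Nat.mod_add_mod]
  have h2 : (x : ℕ) + 1 + (n - 1) = (x : ℕ) + n := by omega
  rw [h2, Nat.add_mod_right, Nat.mod_eq_of_lt hx]

lemma fsucc_fpred (x : Fin n) : fsucc (fpred x) = x := by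
  apply Fin.ext
  have hx := x.isLt
  have hn : 0 < n := Nat.lt_of_le_of_lt (Nat.zero_le _) hx
  simp only [fpred_val, fsucc_val]
  rw [Nat.mod_add_mod]
  have h : (x : ℕ) + n - 1 + 1 = (x : ℕ) + n := by omega
  rw [h, Nat.add_mod_right, Nat.mod_eq_of_lt hx]

lemma fsucc_injective (x y : Fin n) (h : fsucc x = fsucc y) : x = y := by
  have := congrArg fpred h
  rwa [fpred_fsucc, fpred_fsucc] at this

variable {c : ℕ → Fin 2} {γ : Fin 2}

lemma cyc_arc_iff {x y : Fin n} :
    cycArc n c γ x y ↔ (y = fsucc x ∧ c (x : ℕ) = γ) := by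
  constructor
  · rintro ⟨h1, h2⟩; exact ⟨Fin.ext h1, h2⟩
  · rintro ⟨h1, h2⟩; exact ⟨congrArg Fin.val h1, h2⟩

lemma cyc_arc_succ {x : Fin n} (h : c (x : ℕ) = γ) : cycArc n c γ x (fsucc x) :=
  cyc_arc_iff.mpr ⟨rfl, h⟩

lemma cyc_arc_in {x y : Fin n} (h : cycArc n c γ x y) :
    x = fpred y ∧ c ((fpred y : Fin n) : ℕ) = γ := by
  rcases cyc_arc_iff.mp h with ⟨h1, h2⟩
  subst h1
  rw [fpred_fsucc]
  exact ⟨rfl, h2⟩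

lemma cyc_no_out {x : Fin n} (h : c (x : ℕ) ≠ γ) : ∀ y, ¬ cycArc n c γ x y := by
  intro y hy; exact h (cyc_arc_iff.mp hy).2

lemma cyc_no_in {y : Fin n} (h : c ((fpred y : Fin n) : ℕ) ≠ γ) :
    ∀ x, ¬ cycArc n c γ x y := by
  intro x hx; exact h (cyc_arc_in hx).2


section Generic

variable {V W : Type*} {r : V → V → Prop} {G : V → V → Prop} {H : W → W → Prop}

lemma exists_first {a b : V} (h : TransGen r a b) : ∃ w, r a w := by
  induction h with
  | single h => exact ⟨_, h⟩
  | tail _ _ ih => exact ih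

lemma exists_last {a b : V} (h : TransGen r a b) : ∃ w, r w b := by
  induction h with
  | single h => exact ⟨_, h⟩
  | tail _ h _ => exact ⟨_, h⟩

lemma lift_fst {x y : V} (j : W) (h : TransGen G x y) :
    TransGen (boxArc G H) (x, j) (y, j) :=
  TransGen.lift (fun a => (a, j)) (fun _ _ hab => Or.inr ⟨rfl, hab⟩) _ _ h

lemma lift_snd {x y : W} (i : V) (h : TransGen H x y) :
    TransGen (boxArc G H) (i, x) (i, y) :=
  TransGen.lift (fun a => (i, a)) (fun _ _ hab => Or.inl ⟨rfl, hab⟩) _ _ h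

lemma snd_const (hH : ∀ a b, ¬ H a b) {p q : V × W}
    (h : TransGen (boxArc G H) p q) : p.2 = q.2 := by
  induction h with
  | single h =>
      rcases h with ⟨_, hv⟩ | ⟨h2, _⟩
      · exact absurd hv (hH _ _)
      · exact h2
  | tail _ h ih =>
      rcases h with ⟨_, hv⟩ | ⟨h2, _⟩
      · exact absurd hv (hH _ _)
      · exact ih.trans h2

lemma fst_const (hG : ∀ a b, ¬ G a b) {p q : V × W}
    (h : TransGen (boxArc G H) p q) : p.1 = q.1 := by
  induction h with
  | single h =>
      rcases h with ⟨h1, _⟩ | ⟨_, hv⟩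
      · exact h1
      · exact absurd hv (hG _ _)
  | tail _ h ih =>
      rcases h with ⟨h1, _⟩ | ⟨_, hv⟩
      · exact ih.trans h1
      · exact absurd hv (hG _ _)

lemma swap_box {p q : V × W} (h : boxArc G H p q) :
    boxArc H G p.swap q.swap := by
  rcases h with ⟨h1, h2⟩ | ⟨h1, h2⟩
  · exact Or.inr ⟨h1, h2⟩
  · exact Or.inl ⟨h1, h2⟩

lemma swap_trans {p q : V × W} (h : TransGen (boxArc G H) p q) :
    TransGen (boxArc H G) p.swap q.swap :=
  TransGen.lift Prod.swap (fun _ _ hab => swap_box hab) _ _ h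

lemma swap_bikernel {G1 G2 : V → V → Prop} {H1 H2 : W → W → Prop} {B : Set (V × W)}
    (h : IsBikernel (boxArc G1 H1) (boxArc G2 H2) B) :
    IsBikernel (boxArc H1 G1) (boxArc H2 G2) (Prod.swap '' B) := by
  obtain ⟨hne, hind, habs, hdom⟩ := h
  refine ⟨hne.image _, ?_, ?_, ?_⟩
  · rintro u ⟨u', hu', rfl⟩ v ⟨v', hv', rfl⟩ huv
    have hne' : u' ≠ v' := fun h => huv (by rw [h])
    obtain ⟨h1, h2⟩ := hind u' hu' v' hv' hne'
    constructor
    · intro hT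
      have := swap_trans hT
      rw [Prod.swap_swap, Prod.swap_swap] at this
      exact h1 this
    · intro hT
      have := swap_trans hT
      rw [Prod.swap_swap, Prod.swap_swap] at this
      exact h2 this
  · intro v hv
    have hv' : v.swap ∉ B := by
      intro h; exact hv ⟨v.swap, h, Prod.swap_swap v⟩
    obtain ⟨b, hb, hT⟩ := habs v.swap hv'
    refine ⟨b.swap, ⟨b, hb, rfl⟩, ?_⟩
    have := swap_trans hT
    rwa [Prod.swap_swap] at this
  · intro v hv
    have hv' : v.swap ∉ B := by
      intro h; exact hv ⟨v.swap, h, Prod.swap_swap v⟩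
    obtain ⟨b, hb, hT⟩ := hdom v.swap hv'
    refine ⟨b.swap, ⟨b, hb, rfl⟩, ?_⟩
    have := swap_trans hT
    rwa [Prod.swap_swap] at this

end Generic

lemma cyc_mono_reach {n : ℕ} {c : ℕ → Fin 2} {γ : Fin 2}
    (hm : ∀ i, i < n → c i = γ) (x y : Fin n) (hxy : x ≠ y) :
    TransGen (cycArc n c γ) x y := by
  have hx := x.isLt
  have hy := y.isLt
  have hn : 0 < n := Nat.lt_of_le_of_lt (Nat.zero_le _) hx
  have key : ∀ (k : ℕ) (z : Fin n),
      TransGen (cycArc n c γ) z ⟨((z : ℕ) + (k + 1)) % n, Nat.mod_lt _ hn⟩ := by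
    intro k
    induction k with
    | zero =>
        intro z
        exact TransGen.single ⟨rfl, hm _ z.isLt⟩
    | succ k ih =>
        intro z
        refine (ih z).tail ?_
        refine ⟨?_, hm _ (Nat.mod_lt _ hn)⟩
        show ((z : ℕ) + (k + 1 + 1)) % n = (((z : ℕ) + (k + 1)) % n + 1) % n
        rw [Nat.mod_add_mod]
        ring_nf
  set d := ((y : ℕ) + n - (x : ℕ)) % n with hd
  have hd0 : d ≠ 0 := by
    intro h0
    have hdvd : n ∣ ((y : ℕ) + n - (x : ℕ)) := Nat.dvd_of_mod_eq_zero h0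
    obtain ⟨t, ht⟩ := hdvd
    have : (x : ℕ) = (y : ℕ) := by
      rcases t with _ | _ | t
      · omega
      · omega
      · have hge : 2 * n ≤ n * (t + 1 + 1) := by
          calc 2 * n = n * 2 := by ring
          _ ≤ n * (t + 1 + 1) := Nat.mul_le_mul_left n (by omega)
        omega
    exact hxy (Fin.ext this)
  obtain ⟨k, hk⟩ : ∃ k, d = k + 1 := ⟨d - 1, by omega⟩
  have hfin : (⟨((x : ℕ) + (k + 1)) % n, Nat.mod_lt _ hn⟩ : Fin n) = y := by
    apply Fin.ext
    show ((x : ℕ) + (k + 1)) % n = (y : ℕ)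
    rw [← hk, hd, Nat.add_mod_mod]
    have : (x : ℕ) + ((y : ℕ) + n - (x : ℕ)) = (y : ℕ) + n := by omega
    rw [this, Nat.add_mod_right, Nat.mod_eq_of_lt hy]
  have := key k x
  rwa [hfin] at this


/-! ### Bikernel generic lemmas -/

section Bik
variable {V : Type*} {A1 A2 : V → V → Prop} {B : Set V}

lemma bik_forced_out (h : IsBikernel A1 A2 B) {v : V} (hv : ∀ w, ¬ A1 v w) :
    v ∈ B := by
  by_contra hvB
  obtain ⟨b, _, hT⟩ := h.2.2.1 v hvB
  obtain ⟨w, hw⟩ := exists_first hT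
  exact hv w hw

lemma bik_forced_in (h : IsBikernel A1 A2 B) {v : V} (hv : ∀ w, ¬ A2 w v) :
    v ∈ B := by
  by_contra hvB
  obtain ⟨b, _, hT⟩ := h.2.2.2 v hvB
  obtain ⟨w, hw⟩ := exists_last hT
  exact hv w hw

lemma bik_no_pair (h : IsBikernel A1 A2 B) {u v : V} (hu : u ∈ B) (hv : v ∈ B)
    (hne : u ≠ v) (harc : A1 u v ∨ A2 u v) : False := by
  obtain ⟨hi1, hi2⟩ := h.2.1 u hu v hv hne
  rcases harc with ha | ha
  · exact hi1 (TransGen.single ha)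
  · exact hi2 (TransGen.single ha)

end Bik

def AltC (n : ℕ) (c : ℕ → Fin 2) : Prop := ∀ i, i < n → c i ≠ c ((i + 1) % n)
def MonoC (n : ℕ) (c : ℕ → Fin 2) (γ : Fin 2) : Prop := ∀ i, i < n → c i = γ

section Cycle
variable {n : ℕ} {c : ℕ → Fin 2}

lemma fin2_of_ne_zero {a : Fin 2} (h : a ≠ 0) : a = 1 := by
  rcases fin2_cases a with h' | h' <;> simp_all

lemma fin2_of_ne_one {a : Fin 2} (h : a ≠ 1) : a = 0 := by
  rcases fin2_cases a with h' | h' <;> simp_all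

lemma alt_succ (ha : AltC n c) (x : Fin n) : c ((fsucc x : Fin n) : ℕ) ≠ c (x : ℕ) :=
  fun h => ha (x : ℕ) x.isLt h.symm

lemma alt_pred (ha : AltC n c) (x : Fin n) : c ((fpred x : Fin n) : ℕ) ≠ c (x : ℕ) := by
  have := ha ((fpred x : Fin n) : ℕ) (fpred x).isLt
  intro h
  apply this
  rw [h]
  congr 1
  have : (((fpred x : Fin n) : ℕ) + 1) % n = ((fsucc (fpred x) : Fin n) : ℕ) := rfl
  rw [this, fsucc_fpred]

lemma alt_exists_one (hn : 2 ≤ n) (ha : AltC n c) : ∃ x : Fin n, c (x : ℕ) = 1 := by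
  set x0 : Fin n := ⟨0, by omega⟩ with hx0
  by_cases h : c (x0 : ℕ) = 1
  · exact ⟨x0, h⟩
  · refine ⟨fsucc x0, ?_⟩
    have h0 : c (x0 : ℕ) = 0 := fin2_of_ne_one h
    have := alt_succ ha x0
    rw [h0] at this
    exact fin2_of_ne_zero this

lemma cyc_bik_alt (hn : 2 ≤ n) {B : Set (Fin n)}
    (hB : IsBikernel (cycArc n c 0) (cycArc n c 1) B) : AltC n c := by
  intro i hi heq
  set x : Fin n := ⟨i, hi⟩ with hx
  have hvx : (x : ℕ) = i := rfl
  have hsx : ((fsucc x : Fin n) : ℕ) = (i + 1) % n := rfl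
  rcases fin2_cases (c i) with hc | hc
  · -- two consecutive 0-arcs : fsucc x and fsucc (fsucc x) are forced in B
    have hu : fsucc x ∈ B := by
      apply bik_forced_in hB
      apply cyc_no_in
      rw [fpred_fsucc, hvx, hc]
      decide
    have hv : fsucc (fsucc x) ∈ B := by
      apply bik_forced_in hB
      apply cyc_no_in
      rw [fpred_fsucc, hsx, ← heq, hc]
      decide
    refine bik_no_pair hB hu hv (fsucc_ne hn _).symm (Or.inl ?_)
    exact cyc_arc_succ (by rw [hsx, ← heq, hc])
  · -- two consecutive 1-arcs : x and fsucc x are forced in B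
    have hu : x ∈ B := by
      apply bik_forced_out hB
      apply cyc_no_out
      rw [hvx, hc]
      decide
    have hv : fsucc x ∈ B := by
      apply bik_forced_out hB
      apply cyc_no_out
      rw [hsx, ← heq, hc]
      decide
    refine bik_no_pair hB hu hv (fsucc_ne hn _).symm (Or.inr ?_)
    exact cyc_arc_succ (by rw [hvx, hc])

lemma alt_cyc_bik (hn : 2 ≤ n) (ha : AltC n c) :
    ∃ B, IsBikernel (cycArc n c 0) (cycArc n c 1) B := by
  refine ⟨{x : Fin n | c (x : ℕ) = 1}, ?_, ?_, ?_, ?_⟩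
  · obtain ⟨x, hx⟩ := alt_exists_one hn ha
    exact ⟨x, hx⟩
  · intro u hu v hv _
    constructor
    · intro hT
      obtain ⟨w, hw⟩ := exists_first hT
      exact cyc_no_out (by rw [Set.mem_setOf_eq.mp hu]; decide) w hw
    · intro hT
      obtain ⟨w, hw⟩ := exists_last hT
      refine cyc_no_in ?_ w hw
      have := alt_pred ha v
      rw [Set.mem_setOf_eq.mp hv] at this
      intro h; exact this (by rw [h])
  · intro v hv
    have h0 : c (v : ℕ) = 0 := fin2_of_ne_one hv
    refine ⟨fsucc v, ?_, TransGen.single (cyc_arc_succ h0)⟩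
    have := alt_succ ha v
    rw [h0] at this
    exact fin2_of_ne_zero this
  · intro v hv
    have h0 : c (v : ℕ) = 0 := fin2_of_ne_one hv
    have hp : c ((fpred v : Fin n) : ℕ) = 1 := by
      have := alt_pred ha v
      rw [h0] at this
      exact fin2_of_ne_zero this
    refine ⟨fpred v, hp, ?_⟩
    have harc := cyc_arc_succ (n := n) (γ := 1) hp
    rw [fsucc_fpred] at harc
    exact TransGen.single harc
end Cycle


/-! ### Product lemmas -/

section Product
variable {n1 n2 : ℕ} {c1 c2 : ℕ → Fin 2}

lemma box_no_out {γ : Fin 2} {p : Fin n1 × Fin n2}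
    (h1 : c1 ((p.1 : Fin n1) : ℕ) ≠ γ) (h2 : c2 ((p.2 : Fin n2) : ℕ) ≠ γ) :
    ∀ q, ¬ boxArc (cycArc n1 c1 γ) (cycArc n2 c2 γ) p q := by
  rintro q (⟨-, hv⟩ | ⟨-, hh⟩)
  · exact h2 hv.2
  · exact h1 hh.2

lemma box_no_in {γ : Fin 2} {p : Fin n1 × Fin n2}
    (h1 : c1 ((fpred p.1 : Fin n1) : ℕ) ≠ γ) (h2 : c2 ((fpred p.2 : Fin n2) : ℕ) ≠ γ) :
    ∀ q, ¬ boxArc (cycArc n1 c1 γ) (cycArc n2 c2 γ) q p := by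
  rintro q (⟨-, hv⟩ | ⟨-, hh⟩)
  · exact h2 (cyc_arc_in hv).2
  · exact h1 (cyc_arc_in hh).2

lemma P1 (h1 : 2 ≤ n1) (h2 : 2 ≤ n2) (ha1 : AltC n1 c1) (ha2 : AltC n2 c2) :
    ∃ B, IsBikernel (boxArc (cycArc n1 c1 0) (cycArc n2 c2 0))
      (boxArc (cycArc n1 c1 1) (cycArc n2 c2 1)) B := by
  refine ⟨{p : Fin n1 × Fin n2 | c1 ((p.1 : Fin n1) : ℕ) = 1 ∧ c2 ((p.2 : Fin n2) : ℕ) = 1},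
    ?_, ?_, ?_, ?_⟩
  · obtain ⟨x, hx⟩ := alt_exists_one h1 ha1
    obtain ⟨y, hy⟩ := alt_exists_one h2 ha2
    exact ⟨(x, y), hx, hy⟩
  · intro u hu v hv _
    constructor
    · intro hT
      obtain ⟨w, hw⟩ := exists_first hT
      exact box_no_out (by rw [hu.1]; decide) (by rw [hu.2]; decide) w hw
    · intro hT
      obtain ⟨w, hw⟩ := exists_last hT
      refine box_no_in ?_ ?_ w hw
      · have := alt_pred ha1 v.1
        rw [hv.1] at this
        intro h; exact this (by rw [h])
      · have := alt_pred ha2 v.2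
        rw [hv.2] at this
        intro h; exact this (by rw [h])
  · intro v hv
    rcases fin2_cases (c1 ((v.1 : Fin n1) : ℕ)) with hcv1 | hcv1
    · have s1 : c1 ((fsucc v.1 : Fin n1) : ℕ) = 1 := by
        have := alt_succ ha1 v.1
        rw [hcv1] at this
        exact fin2_of_ne_zero this
      rcases fin2_cases (c2 ((v.2 : Fin n2) : ℕ)) with hcv2 | hcv2
      · have s2 : c2 ((fsucc v.2 : Fin n2) : ℕ) = 1 := by
          have := alt_succ ha2 v.2
          rw [hcv2] at this
          exact fin2_of_ne_zero this
        refine ⟨(fsucc v.1, fsucc v.2), ⟨s1, s2⟩, ?_⟩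
        refine TransGen.head (b := (fsucc v.1, v.2)) (Or.inr ⟨rfl, cyc_arc_succ hcv1⟩)
          (TransGen.single (Or.inl ⟨rfl, cyc_arc_succ hcv2⟩))
      · exact ⟨(fsucc v.1, v.2), ⟨s1, hcv2⟩,
          TransGen.single (Or.inr ⟨rfl, cyc_arc_succ hcv1⟩)⟩
    · have hcv2 : c2 ((v.2 : Fin n2) : ℕ) = 0 := by
        by_contra h
        exact hv ⟨hcv1, fin2_of_ne_zero h⟩
      have s2 : c2 ((fsucc v.2 : Fin n2) : ℕ) = 1 := by
        have := alt_succ ha2 v.2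
        rw [hcv2] at this
        exact fin2_of_ne_zero this
      exact ⟨(v.1, fsucc v.2), ⟨hcv1, s2⟩,
        TransGen.single (Or.inl ⟨rfl, cyc_arc_succ hcv2⟩)⟩
  · intro v hv
    rcases fin2_cases (c1 ((v.1 : Fin n1) : ℕ)) with hcv1 | hcv1
    · have p1 : c1 ((fpred v.1 : Fin n1) : ℕ) = 1 := by
        have := alt_pred ha1 v.1
        rw [hcv1] at this
        exact fin2_of_ne_zero this
      have harc1 : cycArc n1 c1 1 (fpred v.1) v.1 := by
        have := cyc_arc_succ (γ := 1) p1
        rwa [fsucc_fpred] at this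
      rcases fin2_cases (c2 ((v.2 : Fin n2) : ℕ)) with hcv2 | hcv2
      · have p2 : c2 ((fpred v.2 : Fin n2) : ℕ) = 1 := by
          have := alt_pred ha2 v.2
          rw [hcv2] at this
          exact fin2_of_ne_zero this
        have harc2 : cycArc n2 c2 1 (fpred v.2) v.2 := by
          have := cyc_arc_succ (γ := 1) p2
          rwa [fsucc_fpred] at this
        refine ⟨(fpred v.1, fpred v.2), ⟨p1, p2⟩, ?_⟩
        exact TransGen.head (b := (fpred v.1, v.2)) (Or.inl ⟨rfl, harc2⟩)
          (TransGen.single (Or.inr ⟨rfl, harc1⟩))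
      · exact ⟨(fpred v.1, v.2), ⟨p1, hcv2⟩,
          TransGen.single (Or.inr ⟨rfl, harc1⟩)⟩
    · have hcv2 : c2 ((v.2 : Fin n2) : ℕ) = 0 := by
        by_contra h
        exact hv ⟨hcv1, fin2_of_ne_zero h⟩
      have p2 : c2 ((fpred v.2 : Fin n2) : ℕ) = 1 := by
        have := alt_pred ha2 v.2
        rw [hcv2] at this
        exact fin2_of_ne_zero this
      have harc2 : cycArc n2 c2 1 (fpred v.2) v.2 := by
        have := cyc_arc_succ (γ := 1) p2
        rwa [fsucc_fpred] at this
      exact ⟨(v.1, fpred v.2), ⟨hcv1, p2⟩,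
        TransGen.single (Or.inl ⟨rfl, harc2⟩)⟩

lemma P2 {n : ℕ} (hn : 2 ≤ n) {c1 c2 : ℕ → Fin 2}
    (hm1 : MonoC n c1 0) (hm2 : MonoC n c2 1) :
    ∃ B, IsBikernel (boxArc (cycArc n c1 0) (cycArc n c2 0))
      (boxArc (cycArc n c1 1) (cycArc n c2 1)) B := by
  have noV0 : ∀ a b : Fin n, ¬ cycArc n c2 0 a b := fun a b h =>
    absurd h.2 (by rw [hm2 a a.isLt]; decide)
  have noH1 : ∀ a b : Fin n, ¬ cycArc n c1 1 a b := fun a b h =>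
    absurd h.2 (by rw [hm1 a a.isLt]; decide)
  refine ⟨{p : Fin n × Fin n | p.1 = p.2},
    ⟨((⟨0, by omega⟩ : Fin n), (⟨0, by omega⟩ : Fin n)), rfl⟩, ?_, ?_, ?_⟩
  · intro u hu v hv hne
    have hu' : u.1 = u.2 := hu
    have hv' : v.1 = v.2 := hv
    constructor
    · intro hT
      have h22 := snd_const noV0 hT
      exact hne (Prod.ext_iff.mpr ⟨by rw [hu', h22, ← hv'], h22⟩)
    · intro hT
      have h11 := fst_const noH1 hT
      exact hne (Prod.ext_iff.mpr ⟨h11, by rw [← hu', h11, hv']⟩)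
  · intro v hv
    have hne : v.1 ≠ v.2 := fun h => hv h
    exact ⟨(v.2, v.2), rfl, lift_fst v.2 (cyc_mono_reach hm1 v.1 v.2 hne)⟩
  · intro v hv
    have hne : v.1 ≠ v.2 := fun h => hv h
    exact ⟨(v.1, v.1), rfl, lift_snd v.1 (cyc_mono_reach hm2 v.1 v.2 hne)⟩

lemma P2' {n : ℕ} (hn : 2 ≤ n) {c1 c2 : ℕ → Fin 2}
    (hm1 : MonoC n c1 1) (hm2 : MonoC n c2 0) :
    ∃ B, IsBikernel (boxArc (cycArc n c1 0) (cycArc n c2 0))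
      (boxArc (cycArc n c1 1) (cycArc n c2 1)) B := by
  obtain ⟨B, hB⟩ := P2 hn hm2 hm1
  exact ⟨Prod.swap '' B, swap_bikernel hB⟩

lemma P4 (h1 : 2 ≤ n1) (h2 : 2 ≤ n2)
    (hm1 : MonoC n1 c1 0) (hm2 : MonoC n2 c2 1) {B : Set (Fin n1 × Fin n2)}
    (hB : IsBikernel (boxArc (cycArc n1 c1 0) (cycArc n2 c2 0))
      (boxArc (cycArc n1 c1 1) (cycArc n2 c2 1)) B) : n1 = n2 := by
  have noV0 : ∀ a b : Fin n2, ¬ cycArc n2 c2 0 a b := fun a b h =>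
    absurd h.2 (by rw [hm2 a a.isLt]; decide)
  have noH1 : ∀ a b : Fin n1, ¬ cycArc n1 c1 1 a b := fun a b h =>
    absurd h.2 (by rw [hm1 a a.isLt]; decide)
  have row_ex : ∀ j : Fin n2, ∃ i : Fin n1, (i, j) ∈ B := by
    intro j
    by_cases hv : ((⟨0, by omega⟩ : Fin n1), j) ∈ B
    · exact ⟨_, hv⟩
    · obtain ⟨b, hb, hT⟩ := hB.2.2.1 _ hv
      have hj : j = b.2 := snd_const noV0 hT
      refine ⟨b.1, ?_⟩
      have he : ((b.1, j) : Fin n1 × Fin n2) = b := Prod.ext_iff.mpr ⟨rfl, hj⟩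
      rw [he]; exact hb
  have col_ex : ∀ i : Fin n1, ∃ j : Fin n2, (i, j) ∈ B := by
    intro i
    by_cases hv : (i, (⟨0, by omega⟩ : Fin n2)) ∈ B
    · exact ⟨_, hv⟩
    · obtain ⟨b, hb, hT⟩ := hB.2.2.2 _ hv
      have hi : b.1 = i := fst_const noH1 hT
      refine ⟨b.2, ?_⟩
      have he : ((i, b.2) : Fin n1 × Fin n2) = b := Prod.ext_iff.mpr ⟨hi.symm, rfl⟩
      rw [he]; exact hb
  have row_uniq : ∀ b b' : Fin n1 × Fin n2, b ∈ B → b' ∈ B → b.2 = b'.2 → b = b' := by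
    intro b b' hb hb' h22
    by_contra hne
    have h11 : b.1 ≠ b'.1 := fun h => hne (Prod.ext_iff.mpr ⟨h, h22⟩)
    have hT : Relation.TransGen (boxArc (cycArc n1 c1 0) (cycArc n2 c2 0))
        (b.1, b.2) (b'.1, b.2) := lift_fst b.2 (cyc_mono_reach hm1 b.1 b'.1 h11)
    have he : ((b'.1, b.2) : Fin n1 × Fin n2) = b' := Prod.ext_iff.mpr ⟨rfl, h22⟩
    rw [he] at hT
    exact (hB.2.1 b hb b' hb' hne).1 hT
  have col_uniq : ∀ b b' : Fin n1 × Fin n2, b ∈ B → b' ∈ B → b.1 = b'.1 → b = b' := by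
    intro b b' hb hb' h11
    by_contra hne
    have h22 : b.2 ≠ b'.2 := fun h => hne (Prod.ext_iff.mpr ⟨h11, h⟩)
    have hT : Relation.TransGen (boxArc (cycArc n1 c1 1) (cycArc n2 c2 1))
        (b.1, b.2) (b.1, b'.2) := lift_snd b.1 (cyc_mono_reach hm2 b.2 b'.2 h22)
    have he : ((b.1, b'.2) : Fin n1 × Fin n2) = b' := Prod.ext_iff.mpr ⟨h11, rfl⟩
    rw [he] at hT
    exact (hB.2.1 b hb b' hb' hne).2 hT
  classical
  haveI : Fintype ↥B := Fintype.ofFinite _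
  let e2 : ↥B ≃ Fin n2 := Equiv.ofBijective (fun b => (b : Fin n1 × Fin n2).2)
    ⟨fun b b' h => Subtype.ext (row_uniq _ _ b.2 b'.2 h),
     fun j => by
      obtain ⟨i, hi⟩ := row_ex j
      exact ⟨⟨(i, j), hi⟩, rfl⟩⟩
  let e1 : ↥B ≃ Fin n1 := Equiv.ofBijective (fun b => (b : Fin n1 × Fin n2).1)
    ⟨fun b b' h => Subtype.ext (col_uniq _ _ b.2 b'.2 h),
     fun i => by
      obtain ⟨j, hj⟩ := col_ex i
      exact ⟨⟨(i, j), hj⟩, rfl⟩⟩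
  have := Fintype.card_congr (e1.symm.trans e2)
  simpa using this

lemma P4' (h1 : 2 ≤ n1) (h2 : 2 ≤ n2)
    (hm1 : MonoC n1 c1 1) (hm2 : MonoC n2 c2 0) {B : Set (Fin n1 × Fin n2)}
    (hB : IsBikernel (boxArc (cycArc n1 c1 0) (cycArc n2 c2 0))
      (boxArc (cycArc n1 c1 1) (cycArc n2 c2 1)) B) : n1 = n2 :=
  (P4 h2 h1 hm2 hm1 (swap_bikernel hB)).symm

end Product


section Main
variable {n1 n2 : ℕ} {c1 c2 : ℕ → Fin 2}

lemma pair_ne_fst {a b : Fin n1} {d : Fin n2} (h : a ≠ b) : (a, d) ≠ (b, d) :=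
  fun hEq => h (Prod.ext_iff.mp hEq).1

lemma pair_ne_snd {d : Fin n1} {a b : Fin n2} (h : a ≠ b) : (d, a) ≠ (d, b) :=
  fun hEq => h (Prod.ext_iff.mp hEq).2

lemma ne_fsucc {n : ℕ} (hn : 2 ≤ n) (x : Fin n) : x ≠ fsucc x :=
  (fsucc_ne hn x).symm

lemma P3' (h1 : 2 ≤ n1) (h2 : 2 ≤ n2) {B : Set (Fin n1 × Fin n2)}
    (hB : IsBikernel (boxArc (cycArc n1 c1 0) (cycArc n2 c2 0))
      (boxArc (cycArc n1 c1 1) (cycArc n2 c2 1)) B)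
    (hna : ¬ AltC n1 c1) :
    n1 = n2 ∧ ∃ b1 b2 : Fin 2, b1 ≠ b2 ∧ MonoC n1 c1 b1 ∧ MonoC n2 c2 b2 := by
  rw [AltC] at hna
  push_neg at hna
  obtain ⟨i, hi, heq⟩ := hna
  set x : Fin n1 := ⟨i, hi⟩ with hxdef
  have hsx : c1 ((fsucc x : Fin n1) : ℕ) = c1 i := heq.symm
  rcases fin2_cases (c1 i) with hc | hc
  · -- two consecutive 0 arcs in factor 1
    have hm2 : MonoC n2 c2 1 := by
      intro j hj
      by_contra hne0
      have hcj : c2 j = 0 := fin2_of_ne_one hne0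
      set y : Fin n2 := ⟨j, hj⟩ with hydef
      have hp : (fsucc x, fsucc y) ∈ B := by
        refine bik_forced_in hB (box_no_in ?_ ?_)
        · show c1 ((fpred (fsucc x) : Fin n1) : ℕ) ≠ 1
          rw [fpred_fsucc]
          show c1 i ≠ 1
          rw [hc]; decide
        · show c2 ((fpred (fsucc y) : Fin n2) : ℕ) ≠ 1
          rw [fpred_fsucc]
          show c2 j ≠ 1
          rw [hcj]; decide
      have hq : (fsucc (fsucc x), fsucc y) ∈ B := by
        refine bik_forced_in hB (box_no_in ?_ ?_)
        · show c1 ((fpred (fsucc (fsucc x)) : Fin n1) : ℕ) ≠ 1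
          rw [fpred_fsucc, hsx, hc]; decide
        · show c2 ((fpred (fsucc y) : Fin n2) : ℕ) ≠ 1
          rw [fpred_fsucc]
          show c2 j ≠ 1
          rw [hcj]; decide
      refine bik_no_pair hB hp hq (pair_ne_fst (ne_fsucc h1 _)) (Or.inl (Or.inr ⟨rfl, ?_⟩))
      exact cyc_arc_succ (by rw [hsx, hc])
    have hm1 : MonoC n1 c1 0 := by
      intro i' hi'
      by_contra hne
      have hci' : c1 i' = 1 := fin2_of_ne_zero hne
      set x' : Fin n1 := ⟨i', hi'⟩ with hx'def
      set y0 : Fin n2 := ⟨0, by omega⟩ with hy0def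
      have hc0 : c2 ((y0 : Fin n2) : ℕ) = 1 := hm2 _ y0.isLt
      have hc1 : c2 ((fsucc y0 : Fin n2) : ℕ) = 1 := hm2 _ (fsucc y0).isLt
      have hp : (x', y0) ∈ B := by
        refine bik_forced_out hB (box_no_out ?_ ?_)
        · show c1 i' ≠ 0
          rw [hci']; decide
        · rw [hc0]; decide
      have hq : (x', fsucc y0) ∈ B := by
        refine bik_forced_out hB (box_no_out ?_ ?_)
        · show c1 i' ≠ 0
          rw [hci']; decide
        · rw [hc1]; decide
      exact bik_no_pair hB hp hq (pair_ne_snd (ne_fsucc h2 _))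
        (Or.inr (Or.inl ⟨rfl, cyc_arc_succ hc0⟩))
    exact ⟨P4 h1 h2 hm1 hm2 hB, 0, 1, by decide, hm1, hm2⟩
  · -- two consecutive 1 arcs in factor 1
    have hm2 : MonoC n2 c2 0 := by
      intro j hj
      by_contra hne1
      have hcj : c2 j = 1 := fin2_of_ne_zero hne1
      set y : Fin n2 := ⟨j, hj⟩ with hydef
      have hp : (x, y) ∈ B := by
        refine bik_forced_out hB (box_no_out ?_ ?_)
        · show c1 i ≠ 0
          rw [hc]; decide
        · show c2 j ≠ 0
          rw [hcj]; decide
      have hq : (fsucc x, y) ∈ B := by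
        refine bik_forced_out hB (box_no_out ?_ ?_)
        · rw [hsx, hc]; decide
        · show c2 j ≠ 0
          rw [hcj]; decide
      refine bik_no_pair hB hp hq (pair_ne_fst (ne_fsucc h1 _)) (Or.inr (Or.inr ⟨rfl, ?_⟩))
      exact cyc_arc_succ hc
    have hm1 : MonoC n1 c1 1 := by
      intro i' hi'
      by_contra hne
      have hci' : c1 i' = 0 := fin2_of_ne_one hne
      set x' : Fin n1 := ⟨i', hi'⟩ with hx'def
      set y0 : Fin n2 := ⟨0, by omega⟩ with hy0def
      have hc0 : c2 ((y0 : Fin n2) : ℕ) = 0 := hm2 _ y0.isLt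
      have hc1 : c2 ((fsucc y0 : Fin n2) : ℕ) = 0 := hm2 _ (fsucc y0).isLt
      have hp : (fsucc x', fsucc y0) ∈ B := by
        refine bik_forced_in hB (box_no_in ?_ ?_)
        · show c1 ((fpred (fsucc x') : Fin n1) : ℕ) ≠ 1
          rw [fpred_fsucc]
          show c1 i' ≠ 1
          rw [hci']; decide
        · show c2 ((fpred (fsucc y0) : Fin n2) : ℕ) ≠ 1
          rw [fpred_fsucc, hc0]; decide
      have hq : (fsucc x', fsucc (fsucc y0)) ∈ B := by
        refine bik_forced_in hB (box_no_in ?_ ?_)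
        · show c1 ((fpred (fsucc x') : Fin n1) : ℕ) ≠ 1
          rw [fpred_fsucc]
          show c1 i' ≠ 1
          rw [hci']; decide
        · show c2 ((fpred (fsucc (fsucc y0)) : Fin n2) : ℕ) ≠ 1
          rw [fpred_fsucc, hc1]; decide
      exact bik_no_pair hB hp hq (pair_ne_snd (ne_fsucc h2 _))
        (Or.inl (Or.inl ⟨rfl, cyc_arc_succ hc1⟩))
    exact ⟨P4' h1 h2 hm1 hm2 hB, 1, 0, by decide, hm1, hm2⟩

end Main

end BoxCycAux

/-- The Cartesian product of two bicolored directed cycles has a bikernel iff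
either both cycles have bikernels, or both are monochromatic of the same length
and of opposite colors. -/
theorem box_cycles_bikernel_iff (n1 n2 : ℕ) (h1 : 2 ≤ n1) (h2 : 2 ≤ n2)
    (c1 c2 : ℕ → Fin 2) :
    (∃ B, IsBikernel (boxArc (cycArc n1 c1 0) (cycArc n2 c2 0))
        (boxArc (cycArc n1 c1 1) (cycArc n2 c2 1)) B) ↔
      ((∃ B1, IsBikernel (cycArc n1 c1 0) (cycArc n1 c1 1) B1) ∧
       (∃ B2, IsBikernel (cycArc n2 c2 0) (cycArc n2 c2 1) B2)) ∨
      (n1 = n2 ∧ ∃ b1 b2 : Fin 2, b1 ≠ b2 ∧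
        (∀ i, i < n1 → c1 i = b1) ∧ (∀ i, i < n2 → c2 i = b2)) := by
  constructor
  · rintro ⟨B, hB⟩
    by_cases hA1 : BoxCycAux.AltC n1 c1
    · by_cases hA2 : BoxCycAux.AltC n2 c2
      · exact Or.inl ⟨BoxCycAux.alt_cyc_bik h1 hA1, BoxCycAux.alt_cyc_bik h2 hA2⟩
      · obtain ⟨hn, b2, b1, hne, hm2, hm1⟩ :=
          BoxCycAux.P3' h2 h1 (BoxCycAux.swap_bikernel hB) hA2
        exact Or.inr ⟨hn.symm, b1, b2, hne.symm, hm1, hm2⟩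
    · obtain ⟨hn, b1, b2, hne, hm1, hm2⟩ := BoxCycAux.P3' h1 h2 hB hA1
      exact Or.inr ⟨hn, b1, b2, hne, hm1, hm2⟩
  · rintro (⟨⟨B1, hB1⟩, ⟨B2, hB2⟩⟩ | ⟨hn, b1, b2, hne, hm1, hm2⟩)
    · exact BoxCycAux.P1 h1 h2 (BoxCycAux.cyc_bik_alt h1 hB1) (BoxCycAux.cyc_bik_alt h2 hB2)
    · subst hn
      rcases BoxCycAux.fin2_ne b1 b2 hne with ⟨hb1, hb2⟩ | ⟨hb1, hb2⟩
      · subst hb1; subst hb2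
        exact BoxCycAux.P2 h1 hm1 hm2
      · subst hb1; subst hb2
        exact BoxCycAux.P2' h1 hm1 hm2
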